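/- The set of invertible elements of C([0,1]×[0,1]), the Banach algebra of continuous complex-valued functions on the unit square with the supremum norm, is not dense in C([0,1]×[0,1]); that is, there exists a continuous function f : [0,1]×[0,1] → ℂ and ε > 0 such that every continuous g : [0,1]×[0,1] → ℂ with sup-distance less than ε from f has a zero. -/

import Mathlib

open Set Complex


/-- A complex number close to another nonzero one has ratio in the slit plane. -/
lemma ratio_mem_slitPlane {z w : ℂ} (hw : w ≠ 0) (h : ‖z - w‖ < ‖w‖) :
    z / w ∈ Complex.slitPlane := by
  have hlt : ‖z / w - 1‖ < 1 := by
    rw [show z / w - 1 = (z - w) / w by field_simp]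
    rw [norm_div]
    exact (div_lt_one (norm_pos_iff.mpr hw)).mpr h
  rw [Complex.mem_slitPlane_iff]
  left
  have h1 : |(z / w - 1).re| ≤ ‖z / w - 1‖ := by
    exact Complex.abs_re_le_norm _
  have h2 : (z / w - 1).re = (z / w).re - 1 := by simp
  have := abs_le.mp h1
  linarith [this.1]

/-- Uniqueness of winding: a continuous choice of logarithm of 1 over `[0,1]` is constant. -/
lemma exp_eq_one_lift_const {u : ℝ → ℂ} (hc : ContinuousOn u (Icc 0 1))
    (h1 : ∀ t ∈ Icc (0:ℝ) 1, Complex.exp (u t) = 1) : u 1 = u 0 := by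
  have hmem : ∀ t ∈ Icc (0:ℝ) 1, ∃ n : ℤ, u t = n * (2 * Real.pi * Complex.I) := by
    intro t ht
    exact Complex.exp_eq_one_iff.mp (h1 t ht)
  -- imaginary parts form a preconnected subset of 2πℤ
  have hpre : IsPreconnected ((fun t => (u t).im) '' Icc (0:ℝ) 1) :=
    isPreconnected_Icc.image _ (Complex.continuous_im.comp_continuousOn hc)
  have him : ∀ x ∈ (fun t => (u t).im) '' Icc (0:ℝ) 1, ∃ n : ℤ, x = n * (2 * Real.pi) := by
    rintro x ⟨t, ht, rfl⟩
    obtain ⟨n, hn⟩ := hmem t ht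
    refine ⟨n, ?_⟩
    simp only
    rw [hn]
    simp
  have hoc := hpre.ordConnected
  have key : (u 1).im = (u 0).im := by
    by_contra hne
    have h1m : (u 1).im ∈ (fun t => (u t).im) '' Icc (0:ℝ) 1 :=
      ⟨1, by norm_num, rfl⟩
    have h0m : (u 0).im ∈ (fun t => (u t).im) '' Icc (0:ℝ) 1 :=
      ⟨0, by norm_num, rfl⟩
    obtain ⟨n1, hn1⟩ := him _ h1m
    obtain ⟨n0, hn0⟩ := him _ h0m
    set a := min (u 1).im (u 0).im
    set b := max (u 1).im (u 0).im
    have ham : a ∈ (fun t => (u t).im) '' Icc (0:ℝ) 1 := by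
      rcases min_cases (u 1).im (u 0).im with ⟨h, _⟩ | ⟨h, _⟩ <;> rw [show a = _ from h] <;> assumption
    have hbm : b ∈ (fun t => (u t).im) '' Icc (0:ℝ) 1 := by
      rcases max_cases (u 1).im (u 0).im with ⟨h, _⟩ | ⟨h, _⟩ <;> rw [show b = _ from h] <;> assumption
    obtain ⟨na, hna⟩ := him _ ham
    obtain ⟨nb, hnb⟩ := him _ hbm
    have hab : a + 2 * Real.pi ≤ b := by
      have hlt : a < b := min_lt_max.mpr hne
      have : na < nb := by
        by_contra hle
        push_neg at hle
        have : (nb : ℝ) ≤ na := by exact_mod_cast hle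
        nlinarith [Real.pi_pos, hna, hnb]
      have : (na : ℝ) + 1 ≤ nb := by exact_mod_cast this
      nlinarith [Real.pi_pos]
    have hc' : a + Real.pi ∈ Icc a b := by
      constructor <;> nlinarith [Real.pi_pos]
    have := hoc.out ham hbm hc'
    obtain ⟨m, hm⟩ := him _ this
    have : (na : ℝ) * 2 + 1 = m * 2 := by
      have heq : (na : ℝ) * (2 * Real.pi) + Real.pi = m * (2 * Real.pi) := by rw [← hna, hm]
      have h' : ((na : ℝ) * 2 + 1) * Real.pi = ((m : ℝ) * 2) * Real.pi := by ring_nf; ring_nf at heq; linarith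
      exact mul_right_cancel₀ Real.pi_ne_zero h'
    have : (na * 2 + 1 : ℤ) = m * 2 := by exact_mod_cast this
    omega
  have hre : (u 1).re = (u 0).re := by
    obtain ⟨n1, hn1⟩ := hmem 1 (by norm_num)
    obtain ⟨n0, hn0⟩ := hmem 0 (by norm_num)
    rw [hn1, hn0]
    simp
  exact Complex.ext hre key
/-- Winding-number agreement for uniformly close loops. -/
lemma wind_eq_of_close {γ₁ γ₂ h₁ h₂ : ℝ → ℂ}
    (hc₁ : ContinuousOn h₁ (Icc 0 1)) (hl₁ : ∀ t ∈ Icc (0:ℝ) 1, Complex.exp (h₁ t) = γ₁ t)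
    (hc₂ : ContinuousOn h₂ (Icc 0 1)) (hl₂ : ∀ t ∈ Icc (0:ℝ) 1, Complex.exp (h₂ t) = γ₂ t)
    (hcl : ∀ t ∈ Icc (0:ℝ) 1, ‖γ₂ t - γ₁ t‖ < ‖γ₁ t‖)
    (hloop₁ : γ₁ 1 = γ₁ 0) (hloop₂ : γ₂ 1 = γ₂ 0) :
    h₂ 1 - h₂ 0 = h₁ 1 - h₁ 0 := by
  have hne₁ : ∀ t ∈ Icc (0:ℝ) 1, γ₁ t ≠ 0 := by
    intro t ht h0
    have := hcl t ht
    rw [h0, norm_zero] at this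
    exact absurd this (norm_nonneg _).not_gt
  have hne₂ : ∀ t ∈ Icc (0:ℝ) 1, γ₂ t ≠ 0 := by
    intro t ht h0
    have h1' := hcl t ht
    rw [h0] at h1'
    have : ‖(0:ℂ) - γ₁ t‖ = ‖γ₁ t‖ := by simp
    rw [this] at h1'
    exact lt_irrefl _ h1'
  -- γᵢ are continuous on Icc since they agree with exp ∘ hᵢ there
  have hγc₁ : ContinuousOn γ₁ (Icc 0 1) :=
    (Complex.continuous_exp.comp_continuousOn hc₁).congr fun t ht => (hl₁ t ht).symm
  have hγc₂ : ContinuousOn γ₂ (Icc 0 1) :=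
    (Complex.continuous_exp.comp_continuousOn hc₂).congr fun t ht => (hl₂ t ht).symm
  set h' : ℝ → ℂ := fun t => h₁ t + Complex.log (γ₂ t / γ₁ t) with hh'
  have hslit : ∀ t ∈ Icc (0:ℝ) 1, γ₂ t / γ₁ t ∈ Complex.slitPlane := fun t ht =>
    ratio_mem_slitPlane (hne₁ t ht) (hcl t ht)
  have hc' : ContinuousOn h' (Icc 0 1) :=
    hc₁.add ((hγc₂.div hγc₁ hne₁).clog hslit)
  have hl' : ∀ t ∈ Icc (0:ℝ) 1, Complex.exp (h' t) = γ₂ t := by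
    intro t ht
    rw [hh']
    simp only
    rw [Complex.exp_add, hl₁ t ht,
      Complex.exp_log (div_ne_zero (hne₂ t ht) (hne₁ t ht))]
    rw [mul_div_assoc', mul_comm, mul_div_assoc, div_self (hne₁ t ht), mul_one]
  -- uniqueness
  have hu : (fun t => h₂ t - h' t) 1 = (fun t => h₂ t - h' t) 0 := by
    apply exp_eq_one_lift_const (hc₂.sub hc')
    intro t ht
    show Complex.exp (h₂ t - h' t) = 1
    rw [Complex.exp_sub, hl₂ t ht, hl' t ht, div_self (hne₂ t ht)]
  have h0i : (0:ℝ) ∈ Icc (0:ℝ) 1 := by norm_num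
  have h1i : (1:ℝ) ∈ Icc (0:ℝ) 1 := by norm_num
  have hr : h' 1 - h' 0 = h₁ 1 - h₁ 0 := by
    rw [hh']
    simp only
    rw [hloop₁, hloop₂]
    ring
  have : h₂ 1 - h' 1 = h₂ 0 - h' 0 := hu
  linear_combination this + hr
/-- Every continuous nonvanishing function on the line admits a continuous logarithm on `[0,1]`. -/
lemma exists_continuous_log {γ : ℝ → ℂ} (hγ : Continuous γ) (hne : ∀ t, γ t ≠ 0) :
    ∃ h : ℝ → ℂ, Continuous h ∧ ∀ t ∈ Icc (0:ℝ) 1, Complex.exp (h t) = γ t := by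
  -- minimum modulus on [0,1]
  obtain ⟨t₀, ht₀, hmin⟩ := isCompact_Icc.exists_isMinOn (s := Icc (0:ℝ) 1)
    (nonempty_Icc.mpr zero_le_one) ((continuous_norm.comp hγ).continuousOn)
  have hm : 0 < ‖γ t₀‖ := norm_pos_iff.mpr (hne t₀)
  -- uniform continuity
  obtain ⟨δ, hδ, hδ'⟩ := Metric.uniformContinuousOn_iff.mp
    (isCompact_Icc.uniformContinuousOn_of_continuous (s := Icc (0:ℝ) 1) hγ.continuousOn)
    ‖γ t₀‖ hm
  obtain ⟨n, hn⟩ := exists_nat_one_div_lt hδ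
  set N : ℝ := (n : ℝ) + 1 with hN
  have hN0 : (0:ℝ) < N := by positivity
  have key : ∀ s ∈ Icc (0:ℝ) 1, ∀ t ∈ Icc (0:ℝ) 1, |s - t| ≤ 1 / N → ‖γ s - γ t‖ < ‖γ t‖ := by
    intro s hs t ht hst
    have hd : dist (γ s) (γ t) < ‖γ t₀‖ := hδ' s hs t ht (by
      rw [Real.dist_eq]; exact lt_of_le_of_lt hst hn)
    calc ‖γ s - γ t‖ = dist (γ s) (γ t) := (dist_eq_norm _ _).symm
      _ < ‖γ t₀‖ := hd
      _ ≤ ‖γ t‖ := isMinOn_iff.mp hmin t ht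
  have main : ∀ k : ℕ, (k : ℝ) ≤ N →
      ∃ h : ℝ → ℂ, Continuous h ∧ ∀ t ∈ Icc (0:ℝ) ((k:ℝ)/N), Complex.exp (h t) = γ t := by
    intro k
    induction k with
    | zero =>
      intro _
      refine ⟨fun _ => Complex.log (γ 0), continuous_const, ?_⟩
      intro t ht
      simp only [Nat.cast_zero, zero_div, Icc_self, mem_singleton_iff] at ht
      rw [ht, Complex.exp_log (hne 0)]
    | succ k ih =>
      intro hk1
      have hk : (k : ℝ) ≤ N := by push_cast at hk1 ⊢; linarith
      obtain ⟨h, hc, hl⟩ := ih hk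
      set a : ℝ := (k : ℝ) / N with ha
      set b : ℝ := ((k : ℝ) + 1) / N with hb
      have hsucc : ((k+1 : ℕ) : ℝ) / N = b := by push_cast; rfl
      have hab : a ≤ b := by
        rw [ha, hb]
        gcongr
        linarith
      have h0a : 0 ≤ a := by positivity
      have hb1 : b ≤ 1 := by
        rw [hb, div_le_one hN0]; push_cast at hk1; linarith
      have ha1 : a ≤ 1 := le_trans hab hb1
      have hba : b - a = 1 / N := by rw [ha, hb]; ring
      set q : ℝ → ℝ := fun t => min (max t a) b with hq
      have hqmem : ∀ t, q t ∈ Icc a b := fun t => ⟨le_min (le_max_right _ _) hab, min_le_right _ _⟩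
      have hq01 : ∀ t, q t ∈ Icc (0:ℝ) 1 :=
        fun t => ⟨le_trans h0a (hqmem t).1, le_trans (hqmem t).2 hb1⟩
      have ha01 : a ∈ Icc (0:ℝ) 1 := ⟨h0a, ha1⟩
      have h1N : 0 ≤ 1 / N := by positivity
      have hratio : ∀ t, ‖γ (q t) - γ a‖ < ‖γ a‖ := by
        intro t
        apply key _ (hq01 t) _ ha01
        rw [abs_le]
        refine ⟨by linarith [(hqmem t).1], by linarith [(hqmem t).2]⟩
      refine ⟨fun t => h (min t a) + Complex.log (γ (q t) / γ a), ?_, ?_⟩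
      · apply Continuous.add
        · exact hc.comp (continuous_id.min continuous_const)
        · apply Continuous.clog
          · exact (hγ.comp ((continuous_id.max continuous_const).min continuous_const)).div_const _
          · intro t
            exact ratio_mem_slitPlane (hne a) (hratio t)
      · intro t ht
        rw [hsucc] at ht
        rcases le_total t a with h1 | h1
        · have hqt : q t = a := by rw [hq]; simp [max_eq_right h1, min_eq_left hab]
          simp only
          rw [hqt, div_self (hne a), Complex.log_one, add_zero, min_eq_left h1]
          exact hl t ⟨ht.1, h1⟩
        · have hqt : q t = t := by rw [hq]; simp [max_eq_left h1, min_eq_left ht.2]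
          simp only
          rw [hqt, min_eq_right h1, Complex.exp_add, hl a ⟨h0a, le_refl a⟩,
            Complex.exp_log (div_ne_zero (hne t) (hne a)), mul_comm]
          exact div_mul_cancel₀ _ (hne a)
  have hNle : ((n + 1 : ℕ) : ℝ) ≤ N := by rw [hN]; push_cast; linarith
  obtain ⟨h, hc, hl⟩ := main (n + 1) hNle
  refine ⟨h, hc, ?_⟩
  have : ((n + 1 : ℕ) : ℝ) / N = 1 := by rw [hN]; push_cast; field_simp
  rwa [this] at hl
/-- The invertible elements of `C([0,1] × [0,1], ℂ)` are **not** dense: there is a continuous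
complex-valued function on the unit square that cannot be uniformly approximated by
nowhere-vanishing continuous functions. -/
theorem not_dense_invertibles_continuousMap_unitSquare :
    ¬ Dense {f : C(unitInterval × unitInterval, ℂ) | IsUnit f} := by
  intro hd
  -- the witness function
  set f : C(unitInterval × unitInterval, ℂ) :=
    ⟨fun p => (((p.1 : ℝ) : ℂ) - 1/2) + (((p.2 : ℝ) : ℂ) - 1/2) * Complex.I, by fun_prop⟩ with hf
  obtain ⟨g, hgball, hgU⟩ := Metric.dense_iff.mp hd f (1/2) (by norm_num)
  have hdist : dist g f < 1/2 := Metric.mem_ball.mp hgball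
  have hgne : ∀ p, g p ≠ 0 := by
    obtain ⟨u, rfl⟩ := hgU
    intro p
    have h := DFunLike.congr_fun u.val_inv p
    simp only [ContinuousMap.mul_apply, ContinuousMap.one_apply] at h
    exact left_ne_zero_of_mul_eq_one h
  have hclose : ∀ p, ‖g p - f p‖ < 1/2 := fun p =>
    lt_of_le_of_lt (by rw [← dist_eq_norm]; exact ContinuousMap.dist_apply_le_dist p) hdist
  -- the family of loops
  set c : ℝ → ℝ := fun s => min (max s 0) 1 with hc
  have hcmem : ∀ s, c s ∈ Icc (0:ℝ) 1 :=
    fun s => ⟨le_min (le_max_right _ _) zero_le_one, min_le_right _ _⟩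
  set x : ℝ → ℝ → ℝ := fun s θ => 1/2 + c s / 2 * Real.cos (2 * Real.pi * θ) with hx
  set y : ℝ → ℝ → ℝ := fun s θ => 1/2 + c s / 2 * Real.sin (2 * Real.pi * θ) with hy
  have hxmem : ∀ s θ, x s θ ∈ Icc (0:ℝ) 1 := by
    intro s θ
    have h1 := (hcmem s).1; have h2 := (hcmem s).2
    have := Real.neg_one_le_cos (2 * Real.pi * θ)
    have := Real.cos_le_one (2 * Real.pi * θ)
    constructor <;> simp only [hx] <;> nlinarith
  have hymem : ∀ s θ, y s θ ∈ Icc (0:ℝ) 1 := by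
    intro s θ
    have h1 := (hcmem s).1; have h2 := (hcmem s).2
    have := Real.neg_one_le_sin (2 * Real.pi * θ)
    have := Real.sin_le_one (2 * Real.pi * θ)
    constructor <;> simp only [hy] <;> nlinarith
  set pt : ℝ → ℝ → unitInterval × unitInterval :=
    fun s θ => (⟨x s θ, hxmem s θ⟩, ⟨y s θ, hymem s θ⟩) with hpt
  set Γ : ℝ → ℝ → ℂ := fun s θ => g (pt s θ) with hΓ
  have hptc : Continuous fun p : ℝ × ℝ => pt p.1 p.2 := by
    apply Continuous.prodMk <;>
    · apply Continuous.subtype_mk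
      fun_prop
  have hΓc : Continuous fun p : ℝ × ℝ => Γ p.1 p.2 := g.continuous.comp hptc
  have hΓs : ∀ s, Continuous (Γ s) :=
    fun s => hΓc.comp (continuous_const.prodMk continuous_id)
  have hΓne : ∀ s θ, Γ s θ ≠ 0 := fun s θ => hgne _
  have hloop : ∀ s, Γ s 1 = Γ s 0 := by
    intro s
    have hxx : x s 1 = x s 0 := by
      simp only [hx, mul_one, mul_zero, Real.cos_two_pi, Real.cos_zero]
    have hyy : y s 1 = y s 0 := by
      simp only [hy, mul_one, mul_zero, Real.sin_two_pi, Real.sin_zero]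
    have hp : pt s 1 = pt s 0 := by
      simp only [hpt]
      exact Prod.ext (Subtype.ext hxx) (Subtype.ext hyy)
    simp only [hΓ, hp]
  -- choose lifts and define the winding function
  choose H hHc hHl using fun s => exists_continuous_log (hΓs s) (hΓne s)
  set w : ℝ → ℂ := fun s => H s 1 - H s 0 with hw
  -- local constancy of w
  have hlc : ∀ s₀ : ℝ, ∀ᶠ s in nhds s₀, w s = w s₀ := by
    intro s₀
    -- minimum modulus of the loop at s₀
    obtain ⟨θ₀, hθ₀, hminon⟩ := isCompact_Icc.exists_isMinOn (s := Icc (0:ℝ) 1)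
      (nonempty_Icc.mpr zero_le_one) ((continuous_norm.comp (hΓs s₀)).continuousOn)
    have hm : 0 < ‖Γ s₀ θ₀‖ := norm_pos_iff.mpr (hΓne s₀ θ₀)
    -- uniform continuity on a compact neighborhood
    have hK : IsCompact (Icc (s₀ - 1) (s₀ + 1) ×ˢ Icc (0:ℝ) 1) :=
      isCompact_Icc.prod isCompact_Icc
    obtain ⟨δ, hδ, hδ'⟩ := Metric.uniformContinuousOn_iff.mp
      (hK.uniformContinuousOn_of_continuous hΓc.continuousOn) ‖Γ s₀ θ₀‖ hm
    rw [Metric.eventually_nhds_iff]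
    refine ⟨min δ 1, lt_min hδ one_pos, ?_⟩
    intro s hs
    have hss : |s - s₀| < min δ 1 := by rwa [Real.dist_eq] at hs
    have hcl : ∀ θ ∈ Icc (0:ℝ) 1, ‖Γ s θ - Γ s₀ θ‖ < ‖Γ s₀ θ‖ := by
      intro θ hθ
      have hmem1 : (s, θ) ∈ Icc (s₀ - 1) (s₀ + 1) ×ˢ Icc (0:ℝ) 1 := by
        refine ⟨?_, hθ⟩
        have := abs_le.mp (le_of_lt (lt_of_lt_of_le hss (min_le_right _ _)))
        exact ⟨by linarith [this.1], by linarith [this.2]⟩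
      have hmem2 : (s₀, θ) ∈ Icc (s₀ - 1) (s₀ + 1) ×ˢ Icc (0:ℝ) 1 := by
        refine ⟨?_, hθ⟩
        constructor <;> linarith
      have hdd : dist ((s, θ) : ℝ × ℝ) (s₀, θ) < δ := by
        rw [Prod.dist_eq]
        simp only [dist_self]
        rw [Real.dist_eq]
        exact lt_of_le_of_lt (max_le (le_refl _) (abs_nonneg _))
          (lt_of_lt_of_le hss (min_le_left _ _))
      calc ‖Γ s θ - Γ s₀ θ‖ = dist ((fun p : ℝ × ℝ => Γ p.1 p.2) (s, θ))
            ((fun p : ℝ × ℝ => Γ p.1 p.2) (s₀, θ)) := by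
            simp only [dist_eq_norm]
        _ < ‖Γ s₀ θ₀‖ := hδ' _ hmem1 _ hmem2 hdd
        _ ≤ ‖Γ s₀ θ‖ := isMinOn_iff.mp hminon θ hθ
    exact wind_eq_of_close (hHc s₀).continuousOn (hHl s₀) (hHc s).continuousOn (hHl s)
      hcl (hloop s₀) (hloop s)
  -- hence w is constant
  have hconst : ∀ s : ℝ, w s = w 0 := by
    intro s
    have hopen : IsOpen {s : ℝ | w s = w 0} := by
      rw [isOpen_iff_eventually]
      intro s₀ hs₀
      filter_upwards [hlc s₀] with s hs
      rw [hs, hs₀]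
    have hopen' : IsOpen {s : ℝ | w s = w 0}ᶜ := by
      rw [isOpen_iff_eventually]
      intro s₀ hs₀
      filter_upwards [hlc s₀] with s hs
      simp only [mem_compl_iff, mem_setOf_eq] at hs₀ ⊢
      rw [hs]
      exact hs₀
    rcases isClopen_iff.mp ⟨⟨hopen'⟩, hopen⟩ with h | h
    · exact absurd (h ▸ rfl : (0:ℝ) ∈ (∅ : Set ℝ)) (notMem_empty 0)
    · have : s ∈ {s : ℝ | w s = w 0} := h ▸ mem_univ s
      exact this
  -- w 0 = 0 since the loop at s = 0 is constant
  have hΓ0 : ∀ θ, Γ 0 θ = Γ 0 0 := by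
    intro θ
    have hc0 : c 0 = 0 := by simp [hc]
    have hxx : x 0 θ = x 0 0 := by simp only [hx, hc0]; ring
    have hyy : y 0 θ = y 0 0 := by simp only [hy, hc0]; ring
    have hp : pt 0 θ = pt 0 0 := by
      simp only [hpt]
      exact Prod.ext (Subtype.ext hxx) (Subtype.ext hyy)
    simp only [hΓ, hp]
  have hw0 : w 0 = 0 := by
    have h0 : (fun _ : ℝ => Complex.log (Γ 0 0)) 1 - (fun _ : ℝ => Complex.log (Γ 0 0)) 0 = 0 := by
      simp
    have := wind_eq_of_close (γ₁ := fun _ => Γ 0 0) (h₁ := fun _ => Complex.log (Γ 0 0))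
      continuousOn_const (fun t _ => Complex.exp_log (hΓne 0 0))
      (hHc 0).continuousOn (hHl 0)
      (fun θ hθ => by
        rw [hΓ0 θ]
        simpa using norm_pos_iff.mpr (hΓne 0 0))
      rfl (hloop 0)
    rw [hw]
    simp only
    rw [this]
    simp
  -- w 1 = 2πi via comparison with the explicit circle loop
  set e : ℝ → ℂ := fun θ => (1/2 : ℂ) * Complex.exp (((2 * Real.pi * θ : ℝ) : ℂ) * Complex.I)
    with he
  set he' : ℝ → ℂ := fun θ => ((Real.log (1/2) : ℝ) : ℂ) + ((2 * Real.pi * θ : ℝ) : ℂ) * Complex.I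
    with hhe
  have hlifte : ∀ θ ∈ Icc (0:ℝ) 1, Complex.exp (he' θ) = e θ := by
    intro θ _
    simp only [hhe, he]
    rw [Complex.exp_add, ← Complex.ofReal_exp, Real.exp_log (by norm_num : (0:ℝ) < 1/2)]
    norm_num
  have hce : ContinuousOn he' (Icc 0 1) := by
    apply Continuous.continuousOn
    fun_prop
  have hnorme : ∀ θ, ‖e θ‖ = 1/2 := by
    intro θ
    simp only [he]
    rw [norm_mul, Complex.norm_exp]
    simp
  have hefp : ∀ θ, e θ = f (pt 1 θ) := by
    intro θ
    have hc1 : c 1 = 1 := by simp [hc]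
    simp only [he, hf, ContinuousMap.coe_mk, hpt, hx, hy, hc1]
    rw [Complex.exp_mul_I]
    push_cast
    ring
  have heloop : e 1 = e 0 := by
    simp only [he]
    have h1 : ((2 * Real.pi * 1 : ℝ) : ℂ) * Complex.I = 2 * (Real.pi : ℂ) * Complex.I := by
      push_cast; ring
    have h0 : ((2 * Real.pi * 0 : ℝ) : ℂ) * Complex.I = 0 := by push_cast; ring
    rw [h1, h0, Complex.exp_two_pi_mul_I, Complex.exp_zero]
  have hcl1 : ∀ θ ∈ Icc (0:ℝ) 1, ‖Γ 1 θ - e θ‖ < ‖e θ‖ := by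
    intro θ _
    rw [hnorme θ, hefp θ]
    exact hclose (pt 1 θ)
  have hw1 := wind_eq_of_close hce hlifte (hHc 1).continuousOn (hHl 1) hcl1 heloop (hloop 1)
  -- contradiction
  have : w 1 = he' 1 - he' 0 := hw1
  rw [hconst 1, hw0] at this
  simp only [hhe] at this
  have h2pi : ((2 * Real.pi * 1 : ℝ) : ℂ) * Complex.I - ((2 * Real.pi * 0 : ℝ) : ℂ) * Complex.I = 0 := by
    linear_combination -this
  have : (2 * Real.pi : ℝ) = 0 := by
    have h' := congrArg Complex.im h2pi
    simpa using h'
  nlinarith [Real.pi_pos]
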